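/- The space X = [0,1] ∪ {2} (with the subspace metric from ℝ) is the underlying space of a topological fractal satisfying the Open Set Condition, but X is not a self regenerating fractal: for the open set U = {2}, no finite family of continuous self-maps of X constant on X \ U makes X a topological fractal. -/

import Mathlib

open Set

/-- Composition of a list of self-maps. -/
def Comp {X : Type*} (l : List (X → X)) : X → X := l.foldr (· ∘ ·) id

namespace Stmt19Aux

abbrev X : Set ℝ := Set.Icc (0:ℝ) 1 ∪ {2}

lemma mem_of_Icc {x : ℝ} (h : x ∈ Set.Icc (0:ℝ) 1) : x ∈ X := Or.inl h

lemma two_mem : (2:ℝ) ∈ X := Or.inr rfl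

lemma icc_of_ne {x : X} (h : (x:ℝ) ≠ 2) : (x:ℝ) ∈ Set.Icc (0:ℝ) 1 :=
  x.2.resolve_right (by simpa using h)

noncomputable def f0 : X → X := fun x =>
  if h : (x:ℝ) = 2 then ⟨1/4, mem_of_Icc (by norm_num)⟩
  else ⟨(x:ℝ)/2, mem_of_Icc (by
    have := icc_of_ne h
    constructor <;> [linarith [this.1]; linarith [this.2]])⟩

noncomputable def f1 : X → X := fun x =>
  if h : (x:ℝ) = 2 then ⟨3/4, mem_of_Icc (by norm_num)⟩
  else ⟨((x:ℝ)+1)/2, mem_of_Icc (by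
    have := icc_of_ne h
    constructor <;> [linarith [this.1]; linarith [this.2]])⟩

noncomputable def g : X → X := fun _ => ⟨2, two_mem⟩

lemma lip_f0 : LipschitzWith 2⁻¹ f0 := by
  apply LipschitzWith.of_dist_le_mul
  intro x y
  have hx := x.2
  have hy := y.2
  simp only [f0, Subtype.dist_eq]
  by_cases hx2 : (x:ℝ) = 2 <;> by_cases hy2 : (y:ℝ) = 2 <;>
    simp [hx2, hy2, Real.dist_eq, NNReal.coe_inv]
  · have h := icc_of_ne hy2
    rw [abs_of_nonneg (by linarith [h.2] : (0:ℝ) ≤ 2 - (y:ℝ)), abs_le]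
    constructor <;> linarith [h.1, h.2]
  · have h := icc_of_ne hx2
    rw [abs_of_nonpos (by linarith [h.2] : (x:ℝ) - 2 ≤ 0), abs_le]
    constructor <;> linarith [h.1, h.2]
  · rw [show (x:ℝ)/2 - (y:ℝ)/2 = ((x:ℝ)-(y:ℝ))/2 by ring, abs_div]
    rw [abs_of_nonneg (by norm_num : (0:ℝ) ≤ 2)]
    linarith [abs_nonneg ((x:ℝ)-(y:ℝ))]

lemma lip_f1 : LipschitzWith 2⁻¹ f1 := by
  apply LipschitzWith.of_dist_le_mul
  intro x y
  simp only [f1, Subtype.dist_eq]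
  by_cases hx2 : (x:ℝ) = 2 <;> by_cases hy2 : (y:ℝ) = 2 <;>
    simp [hx2, hy2, Real.dist_eq, NNReal.coe_inv]
  · have h := icc_of_ne hy2
    rw [abs_of_nonneg (by linarith [h.2] : (0:ℝ) ≤ 2 - (y:ℝ)), abs_le]
    constructor <;> linarith [h.1, h.2]
  · have h := icc_of_ne hx2
    rw [abs_of_nonpos (by linarith [h.2] : (x:ℝ) - 2 ≤ 0), abs_le]
    constructor <;> linarith [h.1, h.2]
  · rw [show ((x:ℝ)+1)/2 - ((y:ℝ)+1)/2 = ((x:ℝ)-(y:ℝ))/2 by ring, abs_div]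
    rw [abs_of_nonneg (by norm_num : (0:ℝ) ≤ 2)]
    linarith [abs_nonneg ((x:ℝ)-(y:ℝ))]

lemma lip_g : LipschitzWith 2⁻¹ g :=
  (LipschitzWith.const _).weaken (by positivity)

lemma comp_cons {Y : Type*} (f : Y → Y) (l : List (Y → Y)) :
    Comp (f :: l) = f ∘ Comp l := rfl

lemma lip_comp (l : List (X → X)) (hl : ∀ f ∈ l, LipschitzWith 2⁻¹ f) :
    LipschitzWith (2⁻¹ ^ l.length) (Comp l) := by
  induction l with
  | nil => simpa [Comp] using LipschitzWith.id
  | cons f l ih =>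
    rw [comp_cons]
    have := (hl f (by simp)).comp (ih fun f hf => hl f (by simp [hf]))
    simpa [pow_succ, mul_comm] using this

instance : CompactSpace X :=
  isCompact_iff_compactSpace.mp (isCompact_Icc.union isCompact_singleton)

end Stmt19Aux

/-- `F` is a topologically contracting system on `Y ⊆ X`. -/
def TopContracting {X : Type*} [TopologicalSpace X] (F : Set (X → X)) (Y : Set X) : Prop :=
  ∀ 𝒰 : Set (Set X), (∀ U ∈ 𝒰, IsOpen U) → Y ⊆ ⋃₀ 𝒰 →
    ∃ n : ℕ, ∀ l : List (X → X), l.length = n → (∀ f ∈ l, f ∈ F) →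
      ∃ U ∈ 𝒰, Comp l '' Y ⊆ U

/-- `(X, F)` is a topological fractal (whole-space version). -/
def TopFractal {X : Type*} [TopologicalSpace X] (F : Set (X → X)) : Prop :=
  F.Finite ∧ (∀ f ∈ F, Continuous f) ∧ (⋃ f ∈ F, Set.range f) = Set.univ ∧
    TopContracting F Set.univ

open Stmt19Aux in
theorem stmt19 :
    (∃ F : Set ((Set.Icc (0:ℝ) 1 ∪ {2} : Set ℝ) → (Set.Icc (0:ℝ) 1 ∪ {2} : Set ℝ)),
      TopFractal F ∧
      ∃ V : Set (Set.Icc (0:ℝ) 1 ∪ {2} : Set ℝ), IsOpen V ∧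
        (F.Pairwise fun f g => Disjoint (f '' V) (g '' V)) ∧
        (⋃ f ∈ F, f '' V) ⊆ V) ∧
    ¬ ∃ F : Set ((Set.Icc (0:ℝ) 1 ∪ {2} : Set ℝ) → (Set.Icc (0:ℝ) 1 ∪ {2} : Set ℝ)),
        (∀ f ∈ F, ∃ c, ∀ x : (Set.Icc (0:ℝ) 1 ∪ {2} : Set ℝ), (x : ℝ) ≠ 2 → f x = c) ∧ TopFractal F := by
  constructor
  · refine ⟨{f0, f1, g}, ⟨?_, ?_, ?_, ?_⟩, ?_⟩
    · exact (Set.finite_singleton g).insert f1 |>.insert f0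
    · rintro f (rfl | rfl | rfl)
      exacts [lip_f0.continuous, lip_f1.continuous, lip_g.continuous]
    · -- ranges cover
      apply Set.eq_univ_of_forall
      intro x
      simp only [Set.mem_iUnion, Set.mem_insert_iff, Set.mem_singleton_iff]
      by_cases hx2 : (x:ℝ) = 2
      · refine ⟨g, Or.inr (Or.inr rfl), x, ?_⟩
        exact Subtype.ext (by simp [g, hx2])
      · have h := icc_of_ne hx2
        by_cases hle : (x:ℝ) ≤ 1/2
        · refine ⟨f0, Or.inl rfl, ⟨2*(x:ℝ), mem_of_Icc ⟨by linarith [h.1], by linarith⟩⟩, ?_⟩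
          have hne : (2*(x:ℝ)) ≠ 2 := by intro hc; nlinarith
          exact Subtype.ext (by simp [f0, hne])
        · refine ⟨f1, Or.inr (Or.inl rfl), ⟨2*(x:ℝ)-1, mem_of_Icc ⟨by linarith, by linarith [h.2]⟩⟩, ?_⟩
          have hne : (2*(x:ℝ)-1) ≠ 2 := by intro hc; nlinarith [h.2]
          exact Subtype.ext (by simp [f1, hne])
    · -- contracting
      intro 𝒰 hopen hcov
      obtain ⟨δ, hδ, hball⟩ := lebesgue_number_lemma_of_metric_sUnion
        (isCompact_univ (X := X)) hopen hcov
      obtain ⟨n, hn⟩ := exists_pow_lt_of_lt_one (show (0:ℝ) < δ/2 by linarith)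
        (show (2⁻¹:ℝ) < 1 by norm_num)
      refine ⟨n, fun l hlen hmem => ?_⟩
      have hlip : LipschitzWith (2⁻¹ ^ n) (Comp l) := by
        rw [← hlen]
        apply lip_comp
        intro f hf
        rcases hmem f hf with rfl | rfl | rfl
        exacts [lip_f0, lip_f1, lip_g]
      set x0 : X := Comp l ⟨2, two_mem⟩
      obtain ⟨U, hU, hsub⟩ := hball x0 (Set.mem_univ _)
      refine ⟨U, hU, ?_⟩
      rintro y ⟨a, -, rfl⟩
      apply hsub
      have h1 : dist (Comp l a) x0 ≤ (2⁻¹:ℝ)^n * dist a (⟨2, two_mem⟩ : X) := by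
        have := hlip.dist_le_mul a ⟨2, two_mem⟩
        simpa using this
      have hab : (0:ℝ) ≤ (a:ℝ) ∧ (a:ℝ) ≤ 2 := by
        rcases a.2 with h | h
        · exact ⟨h.1, by linarith [h.2]⟩
        · simp only [Set.mem_singleton_iff] at h; simp [h]
      have h2 : dist a (⟨2, two_mem⟩ : X) ≤ 2 := by
        rw [Subtype.dist_eq, show ((⟨2, two_mem⟩ : X) : ℝ) = 2 from rfl, Real.dist_eq, abs_le]
        constructor <;> [linarith [hab.1]; linarith [hab.2]]
      have hpow : (0:ℝ) ≤ (2⁻¹:ℝ)^n := by positivity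
      calc dist (Comp l a) x0 ≤ (2⁻¹:ℝ)^n * dist a (⟨2, two_mem⟩ : X) := h1
        _ ≤ (2⁻¹:ℝ)^n * 2 := mul_le_mul_of_nonneg_left h2 hpow
        _ < δ := by nlinarith
    · -- OSC
      refine ⟨Subtype.val ⁻¹' (Set.Ioo (0:ℝ) 1 ∪ Set.Ioi (3/2)), ?_, ?_, ?_⟩
      · exact (isOpen_Ioo.union isOpen_Ioi).preimage continuous_subtype_val
      · have hA : ∀ z ∈ f0 '' (Subtype.val ⁻¹' (Set.Ioo (0:ℝ) 1 ∪ Set.Ioi (3/2))),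
            0 < (z:ℝ) ∧ (z:ℝ) < 1/2 := by
          rintro z ⟨a, ha, rfl⟩
          by_cases h2 : (a:ℝ) = 2
          · simp [f0, h2]; norm_num
          · have hIoo : (a:ℝ) ∈ Set.Ioo (0:ℝ) 1 := by
              rcases ha with h | h
              · exact h
              · exact absurd (icc_of_ne h2).2 (by simp at h ⊢; linarith [h])
            simp only [f0, dif_neg h2]
            exact ⟨by linarith [hIoo.1], by linarith [hIoo.2]⟩
        have hB : ∀ z ∈ f1 '' (Subtype.val ⁻¹' (Set.Ioo (0:ℝ) 1 ∪ Set.Ioi (3/2))),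
            1/2 < (z:ℝ) ∧ (z:ℝ) < 1 := by
          rintro z ⟨a, ha, rfl⟩
          by_cases h2 : (a:ℝ) = 2
          · simp [f1, h2]; norm_num
          · have hIoo : (a:ℝ) ∈ Set.Ioo (0:ℝ) 1 := by
              rcases ha with h | h
              · exact h
              · exact absurd (icc_of_ne h2).2 (by simp at h ⊢; linarith [h])
            simp only [f1, dif_neg h2]
            exact ⟨by linarith [hIoo.1], by linarith [hIoo.2]⟩
        have hC : ∀ z ∈ g '' (Subtype.val ⁻¹' (Set.Ioo (0:ℝ) 1 ∪ Set.Ioi (3/2))),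
            (z:ℝ) = 2 := by rintro z ⟨a, -, rfl⟩; rfl
        have d01 : Disjoint (f0 '' _) (f1 '' _) := Set.disjoint_left.mpr fun z hz hz' => by
          have := hA z hz; have := hB z hz'; linarith [this.1]
        have d02 : Disjoint (f0 '' _) (g '' _) := Set.disjoint_left.mpr fun z hz hz' => by
          have h1 := hA z hz; have h2 := hC z hz'; rw [h2] at h1; linarith [h1.2]
        have d12 : Disjoint (f1 '' _) (g '' _) := Set.disjoint_left.mpr fun z hz hz' => by
          have h1 := hB z hz; have h2 := hC z hz'; rw [h2] at h1; linarith [h1.2]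
        rintro f (rfl | rfl | rfl) g' (rfl | rfl | rfl) hne
        · exact absurd rfl hne
        · exact d01
        · exact d02
        · exact d01.symm
        · exact absurd rfl hne
        · exact d12
        · exact d02.symm
        · exact d12.symm
        · exact absurd rfl hne
      · -- union of images ⊆ V
        intro z hz
        simp only [Set.mem_iUnion, Set.mem_insert_iff, Set.mem_singleton_iff] at hz
        obtain ⟨f, hf, hzf⟩ := hz
        simp only [Set.mem_preimage, Set.mem_union, Set.mem_Ioo, Set.mem_Ioi]
        have hA : ∀ w ∈ f0 '' (Subtype.val ⁻¹' (Set.Ioo (0:ℝ) 1 ∪ Set.Ioi (3/2))),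
            0 < (w:ℝ) ∧ (w:ℝ) < 1/2 := by
          rintro w ⟨a, ha, rfl⟩
          by_cases h2 : (a:ℝ) = 2
          · simp [f0, h2]; norm_num
          · have hIoo : (a:ℝ) ∈ Set.Ioo (0:ℝ) 1 := by
              rcases ha with h | h
              · exact h
              · exact absurd (icc_of_ne h2).2 (by simp at h ⊢; linarith [h])
            simp only [f0, dif_neg h2]
            exact ⟨by linarith [hIoo.1], by linarith [hIoo.2]⟩
        have hB : ∀ w ∈ f1 '' (Subtype.val ⁻¹' (Set.Ioo (0:ℝ) 1 ∪ Set.Ioi (3/2))),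
            1/2 < (w:ℝ) ∧ (w:ℝ) < 1 := by
          rintro w ⟨a, ha, rfl⟩
          by_cases h2 : (a:ℝ) = 2
          · simp [f1, h2]; norm_num
          · have hIoo : (a:ℝ) ∈ Set.Ioo (0:ℝ) 1 := by
              rcases ha with h | h
              · exact h
              · exact absurd (icc_of_ne h2).2 (by simp at h ⊢; linarith [h])
            simp only [f1, dif_neg h2]
            exact ⟨by linarith [hIoo.1], by linarith [hIoo.2]⟩
        rcases hf with rfl | rfl | rfl
        · have := hA z hzf; exact Or.inl ⟨this.1, by linarith [this.2]⟩
        · have := hB z hzf; exact Or.inl ⟨by linarith [this.1], this.2⟩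
        · obtain ⟨a, -, rfl⟩ := hzf
          exact Or.inr (by norm_num [g])
  · -- no self-regeneration at U = {2}
    rintro ⟨F, hconst, hfin, -, hcover, -⟩
    have hinf : (Set.univ : Set (Set.Icc (0:ℝ) 1 ∪ {2} : Set ℝ)).Infinite := by
      have : (Set.Icc (0:ℝ) 1).Infinite := Set.Icc_infinite (by norm_num)
      have h2 : (Set.Icc (0:ℝ) 1 ∪ {2} : Set ℝ).Infinite := this.mono Set.subset_union_left
      haveI := h2.to_subtype
      exact Set.infinite_univ
    rw [← hcover] at hinf
    apply hinf
    apply hfin.biUnion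
    intro f hf
    obtain ⟨c, hc⟩ := hconst f hf
    have : Set.range f ⊆ {c, f ⟨2, Or.inr rfl⟩} := by
      rintro y ⟨x, rfl⟩
      by_cases hx : (x:ℝ) = 2
      · right; rw [show x = ⟨2, Or.inr rfl⟩ from Subtype.ext hx]; rfl
      · left; exact hc x hx
    exact Set.Finite.subset (Set.toFinite _) this
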